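/- Let s = 12, m ≥ 1, and consider the two-sided local trigonometric regression design X of size (2sm+1) × 12 whose rows for j = −sm, ..., sm are (1, cos(πj/6), sin(πj/6), ..., cos(5πj/6), sin(5πj/6), cos(πj)), and x_0 the row at j = 0. Then w_q = X (X' X)^{-1} x_0 has entries w_{qj} = 1/(2m+1) for j ≡ 0 (mod 12), |j| ≤ 12m, and w_{qj} = 0 otherwise. -/

import Mathlib

open Real Matrix

noncomputable def XTwoSided (m : ℕ) : Matrix (Fin (2 * (12 * m) + 1)) (Fin 12) ℝ :=
  fun i c =>
    let j : ℝ := ((i.val : ℤ) - (12 * m : ℕ) : ℤ)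
    if c.val = 0 then 1
    else if c.val = 11 then Real.cos (π * j)
    else if c.val % 2 = 1 then Real.cos (π * (((c.val + 1) / 2 : ℕ) : ℝ) * j / 6)
    else Real.sin (π * (((c.val / 2 : ℕ)) : ℝ) * j / 6)

namespace ClimAux

noncomputable def jv (m : ℕ) (i : Fin (2 * (12 * m) + 1)) : ℝ :=
  (((i.val : ℤ) - (12 * m : ℕ) : ℤ) : ℝ)

def isCos (c : Fin 12) : Prop := c.val = 0 ∨ c.val % 2 = 1

instance : DecidablePred isCos := fun _ => inferInstanceAs (Decidable (_ ∨ _))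

def freq (c : Fin 12) : ℤ := ((c.val + c.val % 2) / 2 : ℕ)

lemma Xalt (m : ℕ) (i : Fin (2 * (12 * m) + 1)) (c : Fin 12) :
    XTwoSided m i c = if isCos c then Real.cos (π * (freq c : ℝ) * jv m i / 6)
      else Real.sin (π * (freq c : ℝ) * jv m i / 6) := by
  fin_cases c <;> (simp only [XTwoSided, isCos, freq, jv]; norm_num) <;> ring_nf

end ClimAux

namespace ClimAux

variable (m : ℕ)

lemma sum_exp (t : ℤ) (h : ¬ (12:ℤ) ∣ t) :
    ∑ i : Fin (2 * (12 * m) + 1),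
      Complex.exp (((π * (t : ℝ) * jv m i / 6 : ℝ) : ℂ) * Complex.I) = 1 := by
  set ω : ℂ := Complex.exp (((π * (t : ℝ) / 6 : ℝ) : ℂ) * Complex.I) with hω
  have hω12 : ω ^ 12 = 1 := by
    rw [hω, ← Complex.exp_nat_mul]
    have e : ((12 : ℕ) : ℂ) * (((π * (t : ℝ) / 6 : ℝ) : ℂ) * Complex.I)
        = (t : ℂ) * (2 * π * Complex.I) := by push_cast; ring
    rw [e, Complex.exp_int_mul_two_pi_mul_I]
  have hω1 : ω ≠ 1 := by
    intro he
    rw [hω, Complex.exp_eq_one_iff] at he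
    obtain ⟨n, hn⟩ := he
    have him : (π * (t : ℝ) / 6 : ℝ) = (n : ℝ) * (2 * π) := by
      have := congrArg Complex.im hn
      simpa using this
    apply h
    refine ⟨n, ?_⟩
    have h2 : π * (t : ℝ) = π * ((12 : ℝ) * n) := by nlinarith [him]
    have h3 : (t : ℝ) = ((12 * n : ℤ) : ℝ) := by
      have := mul_left_cancel₀ Real.pi_ne_zero h2
      push_cast; linarith
    exact_mod_cast h3
  have hpt : ∀ i : Fin (2 * (12 * m) + 1),
      Complex.exp (((π * (t : ℝ) * jv m i / 6 : ℝ) : ℂ) * Complex.I) = ω ^ (i.val) := by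
    intro i
    rw [hω, ← Complex.exp_nat_mul]
    have e : (((π * (t : ℝ) * jv m i / 6 : ℝ) : ℂ)) * Complex.I
        = ((i.val : ℕ) : ℂ) * (((π * (t : ℝ) / 6 : ℝ) : ℂ) * Complex.I)
          + ((-(t * m) : ℤ) : ℂ) * (2 * π * Complex.I) := by
      simp only [jv]; push_cast; ring
    rw [e, Complex.exp_add, Complex.exp_int_mul_two_pi_mul_I, mul_one]
  calc ∑ i : Fin (2 * (12 * m) + 1),
      Complex.exp (((π * (t : ℝ) * jv m i / 6 : ℝ) : ℂ) * Complex.I)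
      = ∑ i : Fin (2 * (12 * m) + 1), ω ^ (i.val) :=
        Finset.sum_congr rfl fun i _ => hpt i
    _ = ∑ k ∈ Finset.range (2 * (12 * m) + 1), ω ^ k := Fin.sum_univ_eq_sum_range _ _
    _ = (ω ^ (2 * (12 * m) + 1) - 1) / (ω - 1) := geom_sum_eq hω1 _
    _ = 1 := by
        have : ω ^ (2 * (12 * m) + 1) = ω := by
          rw [show 2 * (12 * m) + 1 = 12 * (2 * m) + 1 by ring, pow_succ, pow_mul, hω12,
            one_pow, one_mul]
        rw [this, div_self (sub_ne_zero.mpr hω1)]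

noncomputable def Sc (m : ℕ) (t : ℤ) : ℝ := if (12:ℤ) ∣ t then (2 * (12 * m) + 1 : ℝ) else 1

lemma sum_cos (t : ℤ) :
    ∑ i : Fin (2 * (12 * m) + 1), Real.cos (π * (t : ℝ) * jv m i / 6) = Sc m t := by
  by_cases h : (12:ℤ) ∣ t
  · obtain ⟨s, rfl⟩ := h
    have e : ∀ i : Fin (2 * (12 * m) + 1),
        Real.cos (π * ((12 * s : ℤ) : ℝ) * jv m i / 6) = 1 := by
      intro i
      have : π * ((12 * s : ℤ) : ℝ) * jv m i / 6
          = ((s * ((i.val : ℤ) - (12 * m : ℕ)) : ℤ) : ℝ) * (2 * π) := by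
        simp only [jv]; push_cast; ring
      rw [this, Real.cos_int_mul_two_pi]
    rw [Finset.sum_congr rfl fun i _ => e i]
    simp [Sc, Finset.card_univ]
  · have := congrArg Complex.re (sum_exp m t h)
    rw [Complex.re_sum] at this
    simp only [Complex.exp_ofReal_mul_I_re] at this
    simpa [Sc, h] using this

lemma sum_sin (t : ℤ) :
    ∑ i : Fin (2 * (12 * m) + 1), Real.sin (π * (t : ℝ) * jv m i / 6) = 0 := by
  by_cases h : (12:ℤ) ∣ t
  · obtain ⟨s, rfl⟩ := h
    have e : ∀ i : Fin (2 * (12 * m) + 1),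
        Real.sin (π * ((12 * s : ℤ) : ℝ) * jv m i / 6) = 0 := by
      intro i
      have : π * ((12 * s : ℤ) : ℝ) * jv m i / 6
          = ((2 * s * ((i.val : ℤ) - (12 * m : ℕ)) : ℤ) : ℝ) * π := by
        simp only [jv]; push_cast; ring
      rw [this, Real.sin_int_mul_pi]
    rw [Finset.sum_congr rfl fun i _ => e i]
    simp
  · have := congrArg Complex.im (sum_exp m t h)
    rw [Complex.im_sum] at this
    simp only [Complex.exp_ofReal_mul_I_im] at this
    simpa using this

end ClimAux

namespace ClimAux

variable (m : ℕ)

lemma sum_cc (a b : ℤ) :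
    ∑ i : Fin (2 * (12 * m) + 1),
      Real.cos (π * (a : ℝ) * jv m i / 6) * Real.cos (π * (b : ℝ) * jv m i / 6)
      = (Sc m (a - b) + Sc m (a + b)) / 2 := by
  have h : ∀ i : Fin (2 * (12 * m) + 1),
      Real.cos (π * (a : ℝ) * jv m i / 6) * Real.cos (π * (b : ℝ) * jv m i / 6)
      = (Real.cos (π * ((a - b : ℤ) : ℝ) * jv m i / 6)
          + Real.cos (π * ((a + b : ℤ) : ℝ) * jv m i / 6)) / 2 := by
    intro i
    have e1 : π * ((a - b : ℤ) : ℝ) * jv m i / 6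
        = π * (a : ℝ) * jv m i / 6 - π * (b : ℝ) * jv m i / 6 := by push_cast; ring
    have e2 : π * ((a + b : ℤ) : ℝ) * jv m i / 6
        = π * (a : ℝ) * jv m i / 6 + π * (b : ℝ) * jv m i / 6 := by push_cast; ring
    rw [e1, e2, Real.cos_sub, Real.cos_add]; ring
  rw [Finset.sum_congr rfl fun i _ => h i, ← Finset.sum_div, Finset.sum_add_distrib,
    sum_cos, sum_cos]

lemma sum_ss (a b : ℤ) :
    ∑ i : Fin (2 * (12 * m) + 1),
      Real.sin (π * (a : ℝ) * jv m i / 6) * Real.sin (π * (b : ℝ) * jv m i / 6)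
      = (Sc m (a - b) - Sc m (a + b)) / 2 := by
  have h : ∀ i : Fin (2 * (12 * m) + 1),
      Real.sin (π * (a : ℝ) * jv m i / 6) * Real.sin (π * (b : ℝ) * jv m i / 6)
      = (Real.cos (π * ((a - b : ℤ) : ℝ) * jv m i / 6)
          - Real.cos (π * ((a + b : ℤ) : ℝ) * jv m i / 6)) / 2 := by
    intro i
    have e1 : π * ((a - b : ℤ) : ℝ) * jv m i / 6
        = π * (a : ℝ) * jv m i / 6 - π * (b : ℝ) * jv m i / 6 := by push_cast; ring
    have e2 : π * ((a + b : ℤ) : ℝ) * jv m i / 6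
        = π * (a : ℝ) * jv m i / 6 + π * (b : ℝ) * jv m i / 6 := by push_cast; ring
    rw [e1, e2, Real.cos_sub, Real.cos_add]; ring
  rw [Finset.sum_congr rfl fun i _ => h i, ← Finset.sum_div, Finset.sum_sub_distrib,
    sum_cos, sum_cos]

lemma sum_cs (a b : ℤ) :
    ∑ i : Fin (2 * (12 * m) + 1),
      Real.cos (π * (a : ℝ) * jv m i / 6) * Real.sin (π * (b : ℝ) * jv m i / 6) = 0 := by
  have h : ∀ i : Fin (2 * (12 * m) + 1),
      Real.cos (π * (a : ℝ) * jv m i / 6) * Real.sin (π * (b : ℝ) * jv m i / 6)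
      = (Real.sin (π * ((a + b : ℤ) : ℝ) * jv m i / 6)
          - Real.sin (π * ((a - b : ℤ) : ℝ) * jv m i / 6)) / 2 := by
    intro i
    have e1 : π * ((a - b : ℤ) : ℝ) * jv m i / 6
        = π * (a : ℝ) * jv m i / 6 - π * (b : ℝ) * jv m i / 6 := by push_cast; ring
    have e2 : π * ((a + b : ℤ) : ℝ) * jv m i / 6
        = π * (a : ℝ) * jv m i / 6 + π * (b : ℝ) * jv m i / 6 := by push_cast; ring
    rw [e1, e2, Real.sin_sub, Real.sin_add]; ring
  rw [Finset.sum_congr rfl fun i _ => h i, ← Finset.sum_div, Finset.sum_sub_distrib,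
    sum_sin, sum_sin]
  norm_num

lemma sum_sc (a b : ℤ) :
    ∑ i : Fin (2 * (12 * m) + 1),
      Real.sin (π * (a : ℝ) * jv m i / 6) * Real.cos (π * (b : ℝ) * jv m i / 6) = 0 := by
  have h : ∀ i : Fin (2 * (12 * m) + 1),
      Real.sin (π * (a : ℝ) * jv m i / 6) * Real.cos (π * (b : ℝ) * jv m i / 6)
      = Real.cos (π * (b : ℝ) * jv m i / 6) * Real.sin (π * (a : ℝ) * jv m i / 6) := by
    intro i; ring
  rw [Finset.sum_congr rfl fun i _ => h i, sum_cs]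

noncomputable def dd (m : ℕ) : Fin 12 → ℝ :=
  fun c => if c.val = 0 ∨ c.val = 11 then 24 * m else 12 * m

noncomputable def chi : Fin 12 → ℝ := fun c => if isCos c then 1 else 0

noncomputable def Amat (m : ℕ) : Matrix (Fin 12) (Fin 12) ℝ :=
  Matrix.diagonal (dd m) + Matrix.vecMulVec chi chi

lemma XtX : (XTwoSided m)ᵀ * XTwoSided m = Amat m := by
  ext c c'
  rw [Matrix.mul_apply]
  simp only [Matrix.transpose_apply, Xalt]
  have hAe : Amat m c c' = (if c = c' then dd m c else 0) + chi c * chi c' := by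
    simp [Amat, Matrix.diagonal_apply, Matrix.vecMulVec_apply]
  have hv : c.val < 12 := c.isLt
  have hv' : c'.val < 12 := c'.isLt
  by_cases hc : isCos c <;> by_cases hc' : isCos c' <;>
    simp only [hc, hc', if_true, if_false, ite_true, ite_false]
  · -- cos cos
    rw [sum_cc, hAe]
    have hc2 := hc; have hc2' := hc'
    unfold isCos at hc2 hc2'
    by_cases hcc : c = c'
    · subst hcc
      by_cases h0 : c.val = 0 ∨ c.val = 11
      · have h1 : (12:ℤ) ∣ (freq c - freq c) := by simp
        have h2 : (12:ℤ) ∣ (freq c + freq c) := by unfold freq; omega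
        rw [show dd m c = 24 * m from if_pos h0]
        simp [Sc, h1, h2, dd, h0, chi, hc]
        push_cast; ring
      · have h1 : (12:ℤ) ∣ (freq c - freq c) := by simp
        have h2 : ¬ (12:ℤ) ∣ (freq c + freq c) := by unfold freq; omega
        rw [show dd m c = 12 * m from if_neg h0]
        simp [Sc, h1, h2, dd, h0, chi, hc]
        ring
    · have hne : c.val ≠ c'.val := fun h => hcc (Fin.ext h)
      have h1 : ¬ (12:ℤ) ∣ (freq c - freq c') := by unfold freq; omega
      have h2 : ¬ (12:ℤ) ∣ (freq c + freq c') := by unfold freq; omega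
      simp [Sc, h1, h2, hcc, chi, hc, hc']
  · -- cos sin
    rw [sum_cs, hAe]
    have hne : c ≠ c' := fun h => hc' (h ▸ hc)
    simp [hne, chi, hc']
  · -- sin cos
    rw [sum_sc, hAe]
    have hne : c ≠ c' := fun h => hc (h ▸ hc')
    simp [hne, chi, hc]
  · -- sin sin
    rw [sum_ss, hAe]
    have hc2 := hc; have hc2' := hc'
    unfold isCos at hc2 hc2'
    by_cases hcc : c = c'
    · subst hcc
      have h1 : (12:ℤ) ∣ (freq c - freq c) := by simp
      have h2 : ¬ (12:ℤ) ∣ (freq c + freq c) := by unfold freq; omega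
      have h0 : ¬ (c.val = 0 ∨ c.val = 11) := by omega
      rw [show dd m c = 12 * m from if_neg h0]
      simp [Sc, h1, h2, dd, h0, chi, hc]
    · have hne : c.val ≠ c'.val := fun h => hcc (Fin.ext h)
      have h1 : ¬ (12:ℤ) ∣ (freq c - freq c') := by unfold freq; omega
      have h2 : ¬ (12:ℤ) ∣ (freq c + freq c') := by unfold freq; omega
      simp [Sc, h1, h2, hcc, chi, hc]

end ClimAux

namespace ClimAux

variable (m : ℕ)

lemma Amat_mulVec (x : Fin 12 → ℝ) (c : Fin 12) :
    (Amat m *ᵥ x) c = dd m c * x c + chi c * (∑ c', chi c' * x c') := by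
  simp only [Amat, Matrix.add_mulVec, Pi.add_apply, Matrix.mulVec_diagonal]
  congr 1
  simp only [Matrix.mulVec, dotProduct, Matrix.vecMulVec_apply, Finset.mul_sum, mul_assoc]

lemma Amat_posdef (hm : 1 ≤ m) : (Amat m).PosDef := by
  refine posDef_iff_dotProduct_mulVec.mpr ⟨?_, ?_⟩
  · show (Amat m)ᴴ = Amat m
    ext c c'
    simp only [Matrix.conjTranspose_apply, star_trivial, Amat, Matrix.add_apply,
      Matrix.diagonal_apply, Matrix.vecMulVec_apply]
    by_cases h : c = c'
    · subst h; ring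
    · simp [h, Ne.symm h, mul_comm]
  · intro x hx
    have hsx : star x = x := funext fun i => star_trivial _
    rw [hsx]
    have hq : dotProduct x (Amat m *ᵥ x)
        = (∑ c, dd m c * x c ^ 2) + (∑ c', chi c' * x c') ^ 2 := by
      simp only [dotProduct, Amat_mulVec, mul_add, Finset.sum_add_distrib]
      congr 1
      · exact Finset.sum_congr rfl fun c _ => by ring
      · rw [Finset.sum_congr rfl fun c (_ : c ∈ Finset.univ) => (by ring :
          x c * (chi c * ∑ c', chi c' * x c') = (chi c * x c) * ∑ c', chi c' * x c')]
        rw [← Finset.sum_mul, sq]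
    rw [hq]
    obtain ⟨c0, hc0⟩ := Function.ne_iff.mp hx
    have hm' : (1:ℝ) ≤ (m:ℝ) := by exact_mod_cast hm
    have hdd0 : ∀ c, (0:ℝ) ≤ dd m c := fun c => by
      unfold dd; split <;> nlinarith
    have hdd : (0:ℝ) < dd m c0 := by
      unfold dd; split <;> nlinarith
    have hpos : 0 < ∑ c, dd m c * x c ^ 2 :=
      Finset.sum_pos' (fun c _ => mul_nonneg (hdd0 c) (sq_nonneg _))
        ⟨c0, Finset.mem_univ c0, mul_pos hdd (pow_two_pos_of_ne_zero hc0)⟩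
    nlinarith [sq_nonneg (∑ c', chi c' * x c')]

noncomputable def uvec (m : ℕ) : Fin 12 → ℝ :=
  fun c => (if isCos c then (if c.val = 0 ∨ c.val = 11 then (1:ℝ) else 2) else 0)
    / (12 * (2 * (m : ℝ) + 1))

lemma chi_dot_u : ∑ c', chi c' * uvec m c' = 1 / (2 * (m : ℝ) + 1) := by
  have hne : (2 * (m : ℝ) + 1) ≠ 0 := by positivity
  simp only [Fin.sum_univ_succ, Finset.univ_eq_empty, Finset.sum_empty, chi, uvec, isCos]
  norm_num
  field_simp
  ring

lemma Amat_mulVec_u : Amat m *ᵥ uvec m = chi := by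
  funext c
  rw [Amat_mulVec, chi_dot_u]
  have hne : (2 * (m : ℝ) + 1) ≠ 0 := by positivity
  by_cases hc : isCos c
  · by_cases h0 : c.val = 0 ∨ c.val = 11
    · simp only [dd, uvec, chi, hc, h0, if_true, ite_true]
      field_simp
      ring
    · simp only [dd, uvec, chi, hc, h0, if_true, ite_true, if_false, ite_false]
      field_simp
  · simp [dd, uvec, chi, hc]

end ClimAux

namespace ClimAux

variable (m : ℕ)

lemma cos_refl (i : Fin (2 * (12 * m) + 1)) (a b : ℝ) (hab : a + b = 12) :
    Real.cos (π * a * jv m i / 6) = Real.cos (π * b * jv m i / 6) := by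
  set z : ℤ := (i.val : ℤ) - (12 * m : ℕ) with hzdef
  have hj : jv m i = (z : ℝ) := rfl
  have e : π * a * jv m i / 6 = (z : ℝ) * (2 * π) - π * b * jv m i / 6 := by
    rw [hj, show a = 12 - b by linarith]; ring
  have hc : Real.cos ((z : ℝ) * (2 * π)) = 1 := Real.cos_int_mul_two_pi z
  have hs : Real.sin ((z : ℝ) * (2 * π)) = 0 := by
    rw [show (z : ℝ) * (2 * π) = ((2 * z : ℤ) : ℝ) * π by push_cast; ring,
      Real.sin_int_mul_pi]
  rw [e, Real.cos_sub, hc, hs]; ring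

lemma dir_dvd (i : Fin (2 * (12 * m) + 1)) (h : (12:ℤ) ∣ ((i.val : ℤ) - (12 * m : ℕ))) :
    ∑ k ∈ Finset.range 12, Real.cos (π * (k : ℝ) * jv m i / 6) = 12 := by
  obtain ⟨s, hs⟩ := h
  have hj : jv m i = ((12 * s : ℤ) : ℝ) := by rw [jv, hs]
  have e : ∀ k ∈ Finset.range 12, Real.cos (π * (k : ℝ) * jv m i / 6) = 1 := by
    intro k _
    have : π * (k : ℝ) * jv m i / 6 = (((k : ℤ) * s : ℤ) : ℝ) * (2 * π) := by
      rw [hj]; push_cast; ring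
    rw [this, Real.cos_int_mul_two_pi]
  rw [Finset.sum_congr rfl e]
  simp

lemma dir_ndvd (i : Fin (2 * (12 * m) + 1)) (h : ¬ (12:ℤ) ∣ ((i.val : ℤ) - (12 * m : ℕ))) :
    ∑ k ∈ Finset.range 12, Real.cos (π * (k : ℝ) * jv m i / 6) = 0 := by
  set z : ℤ := (i.val : ℤ) - (12 * m : ℕ) with hzdef
  have hj : jv m i = (z : ℝ) := rfl
  set ω : ℂ := Complex.exp (((π * (z : ℝ) / 6 : ℝ) : ℂ) * Complex.I) with hω
  have hω12 : ω ^ 12 = 1 := by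
    rw [hω, ← Complex.exp_nat_mul]
    have e : ((12 : ℕ) : ℂ) * (((π * (z : ℝ) / 6 : ℝ) : ℂ) * Complex.I)
        = (z : ℂ) * (2 * π * Complex.I) := by push_cast; ring
    rw [e, Complex.exp_int_mul_two_pi_mul_I]
  have hω1 : ω ≠ 1 := by
    intro he
    rw [hω, Complex.exp_eq_one_iff] at he
    obtain ⟨n, hn⟩ := he
    have him : (π * (z : ℝ) / 6 : ℝ) = (n : ℝ) * (2 * π) := by
      have := congrArg Complex.im hn
      simpa using this
    apply h
    refine ⟨n, ?_⟩
    have h2 : π * (z : ℝ) = π * ((12 : ℝ) * n) := by nlinarith [him]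
    have h3 : (z : ℝ) = ((12 * n : ℤ) : ℝ) := by
      have := mul_left_cancel₀ Real.pi_ne_zero h2
      push_cast; linarith
    exact_mod_cast h3
  have hpt : ∀ k : ℕ, Real.cos (π * (k : ℝ) * jv m i / 6) = (ω ^ k).re := by
    intro k
    rw [hω, ← Complex.exp_nat_mul]
    have e : ((k : ℕ) : ℂ) * (((π * (z : ℝ) / 6 : ℝ) : ℂ) * Complex.I)
        = ((π * (k : ℝ) * (z : ℝ) / 6 : ℝ) : ℂ) * Complex.I := by push_cast; ring
    rw [e, Complex.exp_ofReal_mul_I_re, hj]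
  have hgeom : ∑ k ∈ Finset.range 12, ω ^ k = 0 := by
    rw [geom_sum_eq hω1, hω12]
    simp
  calc ∑ k ∈ Finset.range 12, Real.cos (π * (k : ℝ) * jv m i / 6)
      = ∑ k ∈ Finset.range 12, (ω ^ k).re := Finset.sum_congr rfl fun k _ => hpt k
    _ = (∑ k ∈ Finset.range 12, ω ^ k).re := (Complex.re_sum _ _).symm
    _ = 0 := by rw [hgeom]; simp

lemma row_sum (i : Fin (2 * (12 * m) + 1)) :
    (XTwoSided m *ᵥ uvec m) i
      = if (12:ℤ) ∣ ((i.val : ℤ) - (12 * m : ℕ)) then 1 / (2 * (m : ℝ) + 1) else 0 := by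
  have hne : (2 * (m : ℝ) + 1) ≠ 0 := by positivity
  have hL : (XTwoSided m *ᵥ uvec m) i
      = (∑ k ∈ Finset.range 12, Real.cos (π * (k : ℝ) * jv m i / 6))
          / (12 * (2 * (m : ℝ) + 1)) := by
    show (∑ c, XTwoSided m i c * uvec m c) = _
    simp only [Xalt, uvec, isCos, freq]
    norm_num [Fin.sum_univ_succ, Finset.sum_range_succ]
    rw [cos_refl m i 7 5 (by norm_num), cos_refl m i 8 4 (by norm_num),
      cos_refl m i 9 3 (by norm_num), cos_refl m i 10 2 (by norm_num),
      cos_refl m i 11 1 (by norm_num)]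
    field_simp
    ring
  by_cases hd : (12:ℤ) ∣ ((i.val : ℤ) - (12 * m : ℕ))
  · rw [hL, dir_dvd m i hd, if_pos hd]
    field_simp
  · rw [hL, dir_ndvd m i hd, if_neg hd]
    simp

end ClimAux

theorem two_sided_climate_normal_filter (m : ℕ) (hm : 1 ≤ m) :
    let X := XTwoSided m
    let x0 : Fin 12 → ℝ := fun c => X ⟨12 * m, by omega⟩ c
    let wq : Fin (2 * (12 * m) + 1) → ℝ := X *ᵥ ((Xᵀ * X)⁻¹ *ᵥ x0)
    ∀ i : Fin (2 * (12 * m) + 1),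
      wq i = if (12 : ℤ) ∣ ((i.val : ℤ) - (12 * m : ℕ)) then 1 / (2 * (m : ℝ) + 1) else 0 := by
  intro X x0 wq i
  have hx0 : x0 = ClimAux.chi := by
    funext c
    show XTwoSided m ⟨12 * m, by omega⟩ c = _
    rw [ClimAux.Xalt]
    have hj : ClimAux.jv m ⟨12 * m, by omega⟩ = 0 := by simp [ClimAux.jv]
    rw [hj]
    by_cases hc : ClimAux.isCos c <;> simp [ClimAux.chi, hc]
  have hpd := ClimAux.Amat_posdef m hm
  have hdet : IsUnit (ClimAux.Amat m).det :=
    (Matrix.isUnit_iff_isUnit_det _).mp hpd.isUnit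
  have hXtX : Xᵀ * X = ClimAux.Amat m := ClimAux.XtX m
  have hiu : (ClimAux.Amat m)⁻¹ *ᵥ ClimAux.chi = ClimAux.uvec m := by
    rw [← ClimAux.Amat_mulVec_u m, Matrix.mulVec_mulVec,
      Matrix.nonsing_inv_mul _ hdet, Matrix.one_mulVec]
  show (X *ᵥ ((Xᵀ * X)⁻¹ *ᵥ x0)) i = _
  rw [hXtX, hx0, hiu]
  exact ClimAux.row_sum m i
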